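/- For every m ≥ 1: N_m(t, 2) = 2^{m-1} for each t ∈ Z_2; and for t ∈ Z_4 (identified with a representative 0 ≤ t ≤ 3), N_m(t, 4) = 2^{2m-2} + (-1)^{t/2} · 2^{3m/2 - 1} · cos(mπ/4) if t is even, and N_m(t, 4) = 2^{2m-2} + (-1)^{(t-1)/2} · 2^{3m/2 - 1} · sin(mπ/4) if t is odd. -/

import Mathlib

/-- `sumSqCount m n t` is the number of `m`-tuples of elements of `ZMod n` whose
squares sum to `t`. -/
noncomputable def sumSqCount (m n : ℕ) (t : ZMod n) : ℕ :=
  Nat.card {x : Fin m → ZMod n // ∑ i, (x i) ^ 2 = t}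

lemma sumSqCount_zero (n : ℕ) (t : ZMod n) :
    sumSqCount 0 n t = if t = 0 then 1 else 0 := by
  classical
  rcases eq_or_ne t 0 with h | h
  · subst h
    simp only [sumSqCount, if_pos rfl]
    have : Unique {x : Fin 0 → ZMod n // ∑ i, (x i) ^ 2 = 0} :=
      ⟨⟨⟨fun i => i.elim0, by simp⟩⟩, fun x => Subtype.ext (funext fun i => i.elim0)⟩
    exact Nat.card_unique
  · simp only [sumSqCount, if_neg h]
    have : IsEmpty {x : Fin 0 → ZMod n // ∑ i, (x i) ^ 2 = t} :=
      ⟨fun x => h (x.2 ▸ by simp)⟩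
    exact Nat.card_of_isEmpty

lemma sumSqCount_succ (m n : ℕ) [NeZero n] (t : ZMod n) :
    sumSqCount (m + 1) n t = ∑ a : ZMod n, sumSqCount m n (t - a ^ 2) := by
  classical
  simp only [sumSqCount, Nat.card_eq_fintype_card]
  rw [← Fintype.card_sigma]
  apply Fintype.card_congr
  exact {
    toFun := fun x => ⟨x.1 0, ⟨Fin.tail x.1, by
      have h := x.2
      rw [Fin.sum_univ_succ] at h
      exact eq_sub_of_add_eq' (by simpa [Fin.tail] using h)⟩⟩
    invFun := fun p => ⟨Fin.cons p.1 p.2.1, by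
      rw [Fin.sum_univ_succ]
      simp only [Fin.cons_zero, Fin.cons_succ]
      rw [p.2.2]
      ring⟩
    left_inv := fun x => Subtype.ext (Fin.cons_self_tail x.1)
    right_inv := fun p => by
      refine Sigma.ext rfl ?_
      simp [Fin.tail_cons]
      exact HEq.rfl }

lemma rec2 (m : ℕ) (t : ZMod 2) :
    sumSqCount (m + 1) 2 t = sumSqCount m 2 t + sumSqCount m 2 (t - 1) := by
  rw [sumSqCount_succ]
  rw [show (Finset.univ : Finset (ZMod 2)) = {0, 1} from by decide]
  rw [Finset.sum_insert (by decide), Finset.sum_singleton]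
  norm_num

lemma rec4 (m : ℕ) (t : ZMod 4) :
    sumSqCount (m + 1) 4 t = 2 * (sumSqCount m 4 t + sumSqCount m 4 (t - 1)) := by
  rw [sumSqCount_succ]
  rw [show (Finset.univ : Finset (ZMod 4)) = {0, 1, 2, 3} from by decide]
  rw [Finset.sum_insert (by decide), Finset.sum_insert (by decide),
    Finset.sum_insert (by decide), Finset.sum_singleton]
  rw [show (0 : ZMod 4) ^ 2 = 0 from by decide, show (1 : ZMod 4) ^ 2 = 1 from by decide,
    show (2 : ZMod 4) ^ 2 = 0 from by decide, show (3 : ZMod 4) ^ 2 = 1 from by decide,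
    sub_zero]
  ring

lemma base2 (t : ZMod 2) : sumSqCount 1 2 t = 1 := by
  rw [show (1 : ℕ) = 0 + 1 from rfl, rec2, sumSqCount_zero, sumSqCount_zero]
  revert t; decide

lemma base4 : sumSqCount 1 4 0 = 2 ∧ sumSqCount 1 4 1 = 2 ∧
    sumSqCount 1 4 2 = 0 ∧ sumSqCount 1 4 3 = 0 := by
  have h : ∀ t : ZMod 4, sumSqCount 1 4 t =
      2 * ((if t = 0 then 1 else 0) + (if t - 1 = 0 then 1 else 0)) := by
    intro t
    rw [show (1 : ℕ) = 0 + 1 from rfl, rec4, sumSqCount_zero, sumSqCount_zero]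
  rw [h, h, h, h]
  norm_num
  decide

lemma mod2 (m : ℕ) (hm : 1 ≤ m) : ∀ t : ZMod 2, sumSqCount m 2 t = 2 ^ (m - 1) := by
  induction m, hm using Nat.le_induction with
  | base => intro t; simpa using base2 t
  | succ k hk ih =>
    intro t
    rw [rec2, ih t, ih (t - 1)]
    rw [show k + 1 - 1 = (k - 1) + 1 by omega, pow_succ]
    ring

lemma key4 (m : ℕ) (hm : 1 ≤ m) :
    ((sumSqCount m 4 0 : ℝ) = 2 ^ (2 * m - 2) +
        (2 : ℝ) ^ (3 * (m : ℝ) / 2 - 1) * Real.cos (m * Real.pi / 4)) ∧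
    ((sumSqCount m 4 1 : ℝ) = 2 ^ (2 * m - 2) +
        (2 : ℝ) ^ (3 * (m : ℝ) / 2 - 1) * Real.sin (m * Real.pi / 4)) ∧
    ((sumSqCount m 4 2 : ℝ) = 2 ^ (2 * m - 2) -
        (2 : ℝ) ^ (3 * (m : ℝ) / 2 - 1) * Real.cos (m * Real.pi / 4)) ∧
    ((sumSqCount m 4 3 : ℝ) = 2 ^ (2 * m - 2) -
        (2 : ℝ) ^ (3 * (m : ℝ) / 2 - 1) * Real.sin (m * Real.pi / 4)) := by
  have hsq : Real.sqrt 2 * Real.sqrt 2 = 2 := Real.mul_self_sqrt (by norm_num)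
  induction m, hm using Nat.le_induction with
  | base =>
    obtain ⟨h0, h1, h2, h3⟩ := base4
    rw [h0, h1, h2, h3]
    have he : (2 : ℝ) ^ (3 * ((1 : ℕ) : ℝ) / 2 - 1) = Real.sqrt 2 := by
      rw [show 3 * ((1 : ℕ) : ℝ) / 2 - 1 = (1 : ℝ) / 2 by norm_num]
      exact (Real.sqrt_eq_rpow 2).symm
    have hc : Real.cos (((1 : ℕ) : ℝ) * Real.pi / 4) = Real.sqrt 2 / 2 := by
      norm_num [Real.cos_pi_div_four]
    have hs : Real.sin (((1 : ℕ) : ℝ) * Real.pi / 4) = Real.sqrt 2 / 2 := by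
      norm_num [Real.sin_pi_div_four]
    rw [he, hc, hs]
    push_cast
    refine ⟨?_, ?_, ?_, ?_⟩
    · linear_combination (-1 / 2 : ℝ) * hsq
    · linear_combination (-1 / 2 : ℝ) * hsq
    · linear_combination (1 / 2 : ℝ) * hsq
    · linear_combination (1 / 2 : ℝ) * hsq
  | succ k hk ih =>
    obtain ⟨i0, i1, i2, i3⟩ := ih
    set B : ℝ := (2 : ℝ) ^ (3 * (k : ℝ) / 2 - 1) with hB
    set c : ℝ := Real.cos (k * Real.pi / 4) with hc
    set s : ℝ := Real.sin (k * Real.pi / 4) with hs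
    have hA : ((2 : ℝ) ^ (2 * (k + 1) - 2)) = 4 * 2 ^ (2 * k - 2) := by
      rw [show 2 * (k + 1) - 2 = (2 * k - 2) + 2 by omega, pow_add]; ring
    have hB' : (2 : ℝ) ^ (3 * ((k + 1 : ℕ) : ℝ) / 2 - 1) = B * (2 * Real.sqrt 2) := by
      push_cast
      rw [show 3 * ((k : ℝ) + 1) / 2 - 1 = (3 * (k : ℝ) / 2 - 1) + (1 + 1 / 2) by ring,
        Real.rpow_add two_pos, Real.rpow_add two_pos, Real.rpow_one, ← Real.sqrt_eq_rpow, hB]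
    have hcos : Real.cos (((k + 1 : ℕ) : ℝ) * Real.pi / 4) = (c - s) * (Real.sqrt 2 / 2) := by
      push_cast
      rw [show ((k : ℝ) + 1) * Real.pi / 4 = (k : ℝ) * Real.pi / 4 + Real.pi / 4 by ring,
        Real.cos_add, Real.cos_pi_div_four, Real.sin_pi_div_four, ← hc, ← hs]
      ring
    have hsin : Real.sin (((k + 1 : ℕ) : ℝ) * Real.pi / 4) = (s + c) * (Real.sqrt 2 / 2) := by
      push_cast
      rw [show ((k : ℝ) + 1) * Real.pi / 4 = (k : ℝ) * Real.pi / 4 + Real.pi / 4 by ring,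
        Real.sin_add, Real.cos_pi_div_four, Real.sin_pi_div_four, ← hc, ← hs]
      ring
    have r0 : (sumSqCount (k + 1) 4 0 : ℝ) = 2 * ((sumSqCount k 4 0 : ℝ) + sumSqCount k 4 3) := by
      rw [rec4, show (0 : ZMod 4) - 1 = 3 from by decide]; push_cast; ring
    have r1 : (sumSqCount (k + 1) 4 1 : ℝ) = 2 * ((sumSqCount k 4 1 : ℝ) + sumSqCount k 4 0) := by
      rw [rec4, show (1 : ZMod 4) - 1 = 0 from by decide]; push_cast; ring
    have r2 : (sumSqCount (k + 1) 4 2 : ℝ) = 2 * ((sumSqCount k 4 2 : ℝ) + sumSqCount k 4 1) := by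
      rw [rec4, show (2 : ZMod 4) - 1 = 1 from by decide]; push_cast; ring
    have r3 : (sumSqCount (k + 1) 4 3 : ℝ) = 2 * ((sumSqCount k 4 3 : ℝ) + sumSqCount k 4 2) := by
      rw [rec4, show (3 : ZMod 4) - 1 = 2 from by decide]; push_cast; ring
    refine ⟨?_, ?_, ?_, ?_⟩
    · rw [r0, i0, i3, hA, hB', hcos]; linear_combination (-(B * (c - s))) * hsq
    · rw [r1, i1, i0, hA, hB', hsin]; linear_combination (-(B * (s + c))) * hsq
    · rw [r2, i2, i1, hA, hB', hcos]; linear_combination ((B * (c - s))) * hsq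
    · rw [r3, i3, i2, hA, hB', hsin]; linear_combination (B * (s + c)) * hsq


theorem stmt_1 (m : ℕ) (hm : 1 ≤ m) :
    (∀ t : ZMod 2, sumSqCount m 2 t = 2 ^ (m - 1)) ∧
    (∀ t : ZMod 4,
      (t.val % 2 = 0 →
        (sumSqCount m 4 t : ℝ) =
          2 ^ (2 * m - 2) +
            (-1 : ℝ) ^ (t.val / 2) * (2 : ℝ) ^ (3 * (m : ℝ) / 2 - 1) *
              Real.cos (m * Real.pi / 4)) ∧
      (t.val % 2 = 1 →
        (sumSqCount m 4 t : ℝ) =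
          2 ^ (2 * m - 2) +
            (-1 : ℝ) ^ ((t.val - 1) / 2) * (2 : ℝ) ^ (3 * (m : ℝ) / 2 - 1) *
              Real.sin (m * Real.pi / 4))) := by
  refine ⟨mod2 m hm, fun t => ?_⟩
  obtain ⟨k0, k1, k2, k3⟩ := key4 m hm
  have ht : t = 0 ∨ t = 1 ∨ t = 2 ∨ t = 3 := by fin_cases t <;>
    first
      | exact Or.inl rfl
      | exact Or.inr (Or.inl rfl)
      | exact Or.inr (Or.inr (Or.inl rfl))
      | exact Or.inr (Or.inr (Or.inr rfl))
  rcases ht with rfl | rfl | rfl | rfl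
  · refine ⟨fun _ => ?_, fun h => absurd h (by decide)⟩
    rw [show ((0 : ZMod 4)).val = 0 from rfl]
    norm_num
    linarith [k0]
  · refine ⟨fun h => absurd h (by decide), fun _ => ?_⟩
    rw [show ((1 : ZMod 4)).val = 1 from rfl]
    norm_num
    linarith [k1]
  · refine ⟨fun _ => ?_, fun h => absurd h (by decide)⟩
    rw [show ((2 : ZMod 4)).val = 2 from rfl]
    norm_num
    linarith [k2]
  · refine ⟨fun h => absurd h (by decide), fun _ => ?_⟩
    rw [show ((3 : ZMod 4)).val = 3 from rfl]
    norm_num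
    linarith [k3]
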